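/- Let A^(ε) be the superalgebra with even part spanned by {a_{i,j} : i ≡ j (mod 2)} and odd part spanned by {x} ∪ {a_{i,j} : i ≢ j (mod 2)}, with multiplication x·x = (ε/2)a_{0,0}, a_{i,j}·x = a_{i,j+1}, x·a_{i,2j} = (−1)^i(a_{i,2j+1} − a_{i+1,2j}), x·a_{i,2j+1} = ((−1)^i/2)(a_{i,2j+2} − 2a_{i+1,2j+1} + a_{i+2,2j}), other products zero, over a field of characteristic ≠ 2. Then A^(ε) satisfies the super right-alternative identity: for all homogeneous a, b, c, (a,b,c) + (−1)^{|b||c|}(a,c,b) = 0, where (u,v,w) = (uv)w − u(vw) and |·| denotes parity. -/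

import Mathlib

/-- Basis of the algebra `A^(ε)`: `none` is the element `x`,
`some (i,j)` is the element `a_{i,j}`. -/
abbrev AeBasis : Type := Option (ℕ × ℕ)

/-- The underlying space of `A^(ε)`: formal `F`-linear combinations of basis elements. -/
abbrev AeSpace (F : Type*) [Field F] : Type _ := AeBasis →₀ F

/-- Product of two basis elements of `A^(ε)`:
`x·x = (ε/2)·a_{0,0}`, `a_{i,j}·x = a_{i,j+1}`,
`x·a_{i,2j} = (−1)^i (a_{i,2j+1} − a_{i+1,2j})`,
`x·a_{i,2j+1} = ((−1)^i/2)(a_{i,2j+2} − 2a_{i+1,2j+1} + a_{i+2,2j})`,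
and all other products of basis elements are zero. -/
noncomputable def mulB (F : Type*) [Field F] (ε : F) : AeBasis → AeBasis → AeSpace F
  | none, none => (ε / 2) • Finsupp.single (some (0, 0)) 1
  | some (i, j), none => Finsupp.single (some (i, j + 1)) 1
  | none, some (i, j) =>
      if j % 2 = 0 then
        ((-1 : F) ^ i) • (Finsupp.single (some (i, j + 1)) (1 : F)
          - Finsupp.single (some (i + 1, j)) 1)
      else
        (((-1 : F) ^ i) / 2) • (Finsupp.single (some (i, j + 1)) (1 : F)
          - (2 : F) • Finsupp.single (some (i + 1, j)) (1 : F)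
          + Finsupp.single (some (i + 2, j - 1)) 1)
  | some _, some _ => 0

/-- The bilinear multiplication of `A^(ε)`, extending `mulB`. -/
noncomputable def mulA (F : Type*) [Field F] (ε : F) (u v : AeSpace F) : AeSpace F :=
  u.sum fun b cb => v.sum fun b' cb' => (cb * cb') • mulB F ε b b'

/-- The generator `x` of `A^(ε)`. -/
noncomputable def xEl (F : Type*) [Field F] : AeSpace F := Finsupp.single none 1

/-- The generator `a_{i,j}` of `A^(ε)`. -/
noncomputable def aEl (F : Type*) [Field F] (i j : ℕ) : AeSpace F :=
  Finsupp.single (some (i, j)) 1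

/-- Parity of a basis element of `A^(ε)`: `|x| = 1`, `|a_{i,j}| = i + j (mod 2)`. -/
def parB : AeBasis → ℕ
  | none => 1
  | some (i, j) => (i + j) % 2

/-- An element of `A^(ε)` is homogeneous of parity `p` if its support consists of
basis elements of parity `p (mod 2)`. -/
def IsHomog {F : Type*} [Field F] (p : ℕ) (u : AeSpace F) : Prop :=
  ∀ b ∈ u.support, parB b = p % 2


section SRA_aux
variable {F : Type*} [Field F] (ε : F)

private lemma mulA_zero_left (v : AeSpace F) : mulA F ε 0 v = 0 := by
  simp [mulA]

private lemma mulA_zero_right (u : AeSpace F) : mulA F ε u 0 = 0 := by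
  simp [mulA]

private lemma mulA_add_left (u1 u2 v : AeSpace F) :
    mulA F ε (u1 + u2) v = mulA F ε u1 v + mulA F ε u2 v := by
  unfold mulA
  rw [Finsupp.sum_add_index']
  · intro b; simp
  · intro b c1 c2; rw [← Finsupp.sum_add]; congr 1; funext b' cb'; rw [add_mul, add_smul]

private lemma mulA_add_right (u v1 v2 : AeSpace F) :
    mulA F ε u (v1 + v2) = mulA F ε u v1 + mulA F ε u v2 := by
  unfold mulA
  rw [← Finsupp.sum_add]
  congr 1; funext b cb
  rw [Finsupp.sum_add_index']
  · intro b'; simp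
  · intro b' c1 c2; rw [mul_add, add_smul]

private lemma mulA_smul_left (c : F) (u v : AeSpace F) :
    mulA F ε (c • u) v = c • mulA F ε u v := by
  unfold mulA
  rw [Finsupp.sum_smul_index, Finsupp.smul_sum]
  · congr 1; funext b cb
    rw [Finsupp.smul_sum]; congr 1; funext b' cb'
    rw [smul_smul, mul_assoc]
  · intro b; simp

private lemma mulA_smul_right (c : F) (u v : AeSpace F) :
    mulA F ε u (c • v) = c • mulA F ε u v := by
  unfold mulA
  rw [Finsupp.smul_sum]
  congr 1; funext b cb
  rw [Finsupp.sum_smul_index, Finsupp.smul_sum]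
  · congr 1; funext b' cb'
    rw [smul_smul, mul_left_comm]
  · intro b; simp

private lemma mulA_single_single (b1 b2 : AeBasis) (c1 c2 : F) :
    mulA F ε (Finsupp.single b1 c1) (Finsupp.single b2 c2) = (c1 * c2) • mulB F ε b1 b2 := by
  unfold mulA
  rw [Finsupp.sum_single_index, Finsupp.sum_single_index]
  · simp
  · simp

private lemma mulA_neg_left (u v : AeSpace F) : mulA F ε (-u) v = - mulA F ε u v := by
  rw [← neg_one_smul F u, mulA_smul_left, neg_one_smul]

private lemma mulA_neg_right (u v : AeSpace F) : mulA F ε u (-v) = - mulA F ε u v := by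
  rw [← neg_one_smul F v, mulA_smul_right, neg_one_smul]

private lemma mulA_sub_left (u1 u2 v : AeSpace F) :
    mulA F ε (u1 - u2) v = mulA F ε u1 v - mulA F ε u2 v := by
  rw [sub_eq_add_neg, mulA_add_left, mulA_neg_left, sub_eq_add_neg]

private lemma mulA_sub_right (u v1 v2 : AeSpace F) :
    mulA F ε u (v1 - v2) = mulA F ε u v1 - mulA F ε u v2 := by
  rw [sub_eq_add_neg, mulA_add_right, mulA_neg_right, sub_eq_add_neg]

private lemma mul_xx : mulA F ε (xEl F) (xEl F) = (ε / 2) • aEl F 0 0 := by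
  rw [xEl, mulA_single_single]; simp [mulB, aEl]

private lemma mul_ax (i j : ℕ) : mulA F ε (aEl F i j) (xEl F) = aEl F i (j + 1) := by
  rw [aEl, xEl, mulA_single_single]; simp [mulB, aEl]

private lemma mul_aa (i j k l : ℕ) : mulA F ε (aEl F i j) (aEl F k l) = 0 := by
  rw [aEl, aEl, mulA_single_single]; simp [mulB]

private lemma mul_xa_even (i j : ℕ) (h : j % 2 = 0) :
    mulA F ε (xEl F) (aEl F i j) =
      ((-1 : F) ^ i) • (aEl F i (j + 1) - aEl F (i + 1) j) := by
  rw [xEl, aEl, mulA_single_single]; simp [mulB, h, aEl]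

private lemma mul_xa_odd (i j : ℕ) (h : j % 2 = 1) :
    mulA F ε (xEl F) (aEl F i j) =
      (((-1 : F) ^ i) / 2) • (aEl F i (j + 1) - (2 : F) • aEl F (i + 1) j
        + aEl F (i + 2) (j - 1)) := by
  rw [xEl, aEl, mulA_single_single]; simp [mulB, h, aEl]

end SRA_aux

/-- The super right-alternator expression. -/
noncomputable def EE (F : Type*) [Field F] (ε s : F) (a b c : AeSpace F) : AeSpace F :=
  (mulA F ε (mulA F ε a b) c - mulA F ε a (mulA F ε b c))
    + s • (mulA F ε (mulA F ε a c) b - mulA F ε a (mulA F ε c b))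

section SRA_aux2
variable {F : Type*} [Field F] (ε s : F)

private lemma negpow {m n : ℕ} (h : m % 2 = n % 2) : (-1 : F) ^ m = (-1 : F) ^ n := by
  rcases Nat.even_or_odd m with hm | hm
  · have hn : Even n := by rcases hm with ⟨k, hk⟩; exact Nat.even_iff.2 (by omega)
    rw [hm.neg_one_pow, hn.neg_one_pow]
  · have hn : Odd n := by rcases hm with ⟨k, hk⟩; exact Nat.odd_iff.2 (by omega)
    rw [hm.neg_one_pow, hn.neg_one_pow]

private lemma sgl_none : (Finsupp.single (none : AeBasis) (1 : F)) = xEl F := rfl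
private lemma sgl_some (i j : ℕ) :
    (Finsupp.single (some (i, j) : AeBasis) (1 : F)) = aEl F i j := rfl

private lemma nat11 (n : ℕ) : n + 1 + 1 = n + 2 := rfl
private lemma nat12 (n : ℕ) : n + 1 + 2 = n + 3 := rfl

private lemma EE_zero₁ (b c : AeSpace F) : EE F ε s 0 b c = 0 := by
  simp [EE, mulA_zero_left]
private lemma EE_zero₂ (a c : AeSpace F) : EE F ε s a 0 c = 0 := by
  simp [EE, mulA_zero_left, mulA_zero_right]
private lemma EE_zero₃ (a b : AeSpace F) : EE F ε s a b 0 = 0 := by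
  simp [EE, mulA_zero_left, mulA_zero_right]

private lemma EE_add₁ (a1 a2 b c : AeSpace F) :
    EE F ε s (a1 + a2) b c = EE F ε s a1 b c + EE F ε s a2 b c := by
  simp only [EE, mulA_add_left]; module
private lemma EE_add₂ (a b1 b2 c : AeSpace F) :
    EE F ε s a (b1 + b2) c = EE F ε s a b1 c + EE F ε s a b2 c := by
  simp only [EE, mulA_add_left, mulA_add_right]; module
private lemma EE_add₃ (a b c1 c2 : AeSpace F) :
    EE F ε s a b (c1 + c2) = EE F ε s a b c1 + EE F ε s a b c2 := by
  simp only [EE, mulA_add_left, mulA_add_right]; module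

private lemma EE_smul₁ (t : F) (a b c : AeSpace F) :
    EE F ε s (t • a) b c = t • EE F ε s a b c := by
  simp only [EE, mulA_smul_left]; module
private lemma EE_smul₂ (t : F) (a b c : AeSpace F) :
    EE F ε s a (t • b) c = t • EE F ε s a b c := by
  simp only [EE, mulA_smul_left, mulA_smul_right]; module
private lemma EE_smul₃ (t : F) (a b c : AeSpace F) :
    EE F ε s a b (t • c) = t • EE F ε s a b c := by
  simp only [EE, mulA_smul_left, mulA_smul_right]; module

private lemma EE_sum₁ {ι : Type*} (t : Finset ι) (f : ι → AeSpace F) (b c : AeSpace F) :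
    EE F ε s (∑ i ∈ t, f i) b c = ∑ i ∈ t, EE F ε s (f i) b c := by
  classical
  induction t using Finset.induction_on with
  | empty => simp [EE_zero₁]
  | insert x t h ih => rw [Finset.sum_insert h, Finset.sum_insert h, EE_add₁, ih]

private lemma EE_sum₂ {ι : Type*} (t : Finset ι) (f : ι → AeSpace F) (a c : AeSpace F) :
    EE F ε s a (∑ i ∈ t, f i) c = ∑ i ∈ t, EE F ε s a (f i) c := by
  classical
  induction t using Finset.induction_on with
  | empty => simp [EE_zero₂]
  | insert x t h ih => rw [Finset.sum_insert h, Finset.sum_insert h, EE_add₂, ih]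

private lemma EE_sum₃ {ι : Type*} (t : Finset ι) (f : ι → AeSpace F) (a b : AeSpace F) :
    EE F ε s a b (∑ i ∈ t, f i) = ∑ i ∈ t, EE F ε s a b (f i) := by
  classical
  induction t using Finset.induction_on with
  | empty => simp [EE_zero₃]
  | insert x t h ih => rw [Finset.sum_insert h, Finset.sum_insert h, EE_add₃, ih]

private lemma decomp (u : AeSpace F) :
    u = ∑ b ∈ u.support, (u b) • Finsupp.single b 1 := by
  conv_lhs => rw [← Finsupp.sum_single u]
  rw [Finsupp.sum]
  refine Finset.sum_congr rfl fun b _ => ?_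
  rw [Finsupp.smul_single, smul_eq_mul, mul_one]

private lemma EE_expand (a b c : AeSpace F) :
    EE F ε s a b c = ∑ b1 ∈ a.support, (a b1) •
      ∑ b2 ∈ b.support, (b b2) •
        ∑ b3 ∈ c.support, (c b3) •
          EE F ε s (Finsupp.single b1 1) (Finsupp.single b2 1) (Finsupp.single b3 1) := by
  conv_lhs => rw [decomp a, decomp b, decomp c]
  rw [EE_sum₁]
  refine Finset.sum_congr rfl fun b1 _ => ?_
  rw [EE_smul₁]; congr 1
  rw [EE_sum₂]
  refine Finset.sum_congr rfl fun b2 _ => ?_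
  rw [EE_smul₂]; congr 1
  rw [EE_sum₃]
  refine Finset.sum_congr rfl fun b3 _ => ?_
  rw [EE_smul₃]

end SRA_aux2

section SRA_key
variable {F : Type*} [Field F]

private lemma keyB (hchar : (2 : F) ≠ 0) (ε : F) (b1 b2 b3 : AeBasis) :
    EE F ε ((-1 : F) ^ (parB b2 * parB b3))
      (Finsupp.single b1 1) (Finsupp.single b2 1) (Finsupp.single b3 1) = 0 := by
  have hp1 : ∀ i : ℕ, (-1 : F) ^ (i + 1) = -(-1 : F) ^ i := by
    intro i; rw [pow_succ]; ring
  have hp2 : ∀ i : ℕ, (-1 : F) ^ (i + 2) = (-1 : F) ^ i := by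
    intro i; rw [pow_add]; norm_num
  rcases b1 with _ | ⟨i, j⟩ <;> rcases b2 with _ | ⟨k, l⟩ <;> rcases b3 with _ | ⟨m, n⟩
  · -- (x, x, x)
    simp only [EE, parB, sgl_none]
    norm_num
  · -- (x, x, a_{m,n})
    simp only [EE, parB, sgl_none, sgl_some, one_mul]
    rcases Nat.mod_two_eq_zero_or_one n with hn | hn
    · have hsg : (-1 : F) ^ ((m + n) % 2) = (-1 : F) ^ m := negpow (by omega)
      have h1 : (n + 1) % 2 = 1 := by omega
      rw [hsg]
      simp only [mul_xx, mulA_smul_left, mul_aa, smul_zero, mul_ax,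
        mul_xa_even ε m n hn, mul_xa_even ε (m + 1) n hn, mul_xa_odd ε m (n + 1) h1,
        mulA_smul_right, mulA_sub_right, mulA_sub_left, mulA_add_left, mulA_add_right,
        mulA_zero_left, mulA_zero_right]
      simp only [Nat.add_sub_cancel, nat11, nat12, hp1, hp2]
      rcases neg_one_pow_eq_or F m with h | h <;> rw [h] <;>
        match_scalars <;> (try field_simp) <;> ring_nf
    · have hsg : (-1 : F) ^ ((m + n) % 2) = (-1 : F) ^ (m + 1) := negpow (by omega)
      have h1 : (n + 1) % 2 = 0 := by omega
      have h2 : (n - 1) % 2 = 0 := by omega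
      have h3 : n - 1 + 1 = n := by omega
      rw [hsg]
      simp only [mul_xx, mulA_smul_left, mul_aa, smul_zero, mul_ax,
        mul_xa_odd ε m n hn, mul_xa_odd ε (m + 1) n hn,
        mul_xa_even ε m (n + 1) h1, mul_xa_even ε (m + 2) (n - 1) h2,
        mulA_smul_right, mulA_sub_right, mulA_sub_left, mulA_add_left, mulA_add_right,
        mulA_zero_left, mulA_zero_right]
      simp only [h3, nat11, nat12, hp1, hp2]
      rcases neg_one_pow_eq_or F m with h | h <;> rw [h] <;>
        match_scalars <;> (try field_simp) <;> ring_nf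
  · -- (x, a_{k,l}, x)
    simp only [EE, parB, sgl_none, sgl_some, mul_one]
    rcases Nat.mod_two_eq_zero_or_one l with hl | hl
    · have hsg : (-1 : F) ^ ((k + l) % 2) = (-1 : F) ^ k := negpow (by omega)
      have h1 : (l + 1) % 2 = 1 := by omega
      rw [hsg]
      simp only [mul_xx, mulA_smul_left, mul_aa, smul_zero, mul_ax,
        mul_xa_even ε k l hl, mul_xa_even ε (k + 1) l hl, mul_xa_odd ε k (l + 1) h1,
        mulA_smul_right, mulA_sub_right, mulA_sub_left, mulA_add_left, mulA_add_right,
        mulA_zero_left, mulA_zero_right]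
      simp only [Nat.add_sub_cancel, nat11, nat12, hp1, hp2]
      rcases neg_one_pow_eq_or F k with h | h <;> rw [h] <;>
        match_scalars <;> (try field_simp) <;> ring_nf
    · have hsg : (-1 : F) ^ ((k + l) % 2) = (-1 : F) ^ (k + 1) := negpow (by omega)
      have h1 : (l + 1) % 2 = 0 := by omega
      have h2 : (l - 1) % 2 = 0 := by omega
      have h3 : l - 1 + 1 = l := by omega
      rw [hsg]
      simp only [mul_xx, mulA_smul_left, mul_aa, smul_zero, mul_ax,
        mul_xa_odd ε k l hl, mul_xa_odd ε (k + 1) l hl,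
        mul_xa_even ε k (l + 1) h1, mul_xa_even ε (k + 2) (l - 1) h2,
        mulA_smul_right, mulA_sub_right, mulA_sub_left, mulA_add_left, mulA_add_right,
        mulA_zero_left, mulA_zero_right]
      simp only [h3, nat11, nat12, hp1, hp2]
      rcases neg_one_pow_eq_or F k with h | h <;> rw [h] <;>
        match_scalars <;> (try field_simp) <;> ring_nf
  · -- (x, a_{k,l}, a_{m,n})
    simp only [EE, sgl_none, sgl_some]
    rcases Nat.mod_two_eq_zero_or_one l with hl | hl <;>
      rcases Nat.mod_two_eq_zero_or_one n with hn | hn <;>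
      simp [mul_aa, mul_xa_even, mul_xa_odd, hl, hn, mulA_zero_left, mulA_zero_right,
        mulA_sub_left, mulA_add_left, mulA_smul_left]
  · -- (a_{i,j}, x, x)
    simp only [EE, parB, sgl_none, sgl_some]
    norm_num
  · -- (a_{i,j}, x, a_{m,n})
    simp only [EE, sgl_none, sgl_some]
    rcases Nat.mod_two_eq_zero_or_one n with hn | hn <;>
      simp [mul_aa, mul_ax, mul_xa_even, mul_xa_odd, hn, mulA_zero_left, mulA_zero_right,
        mulA_sub_right, mulA_add_right, mulA_smul_right]
  · -- (a_{i,j}, a_{k,l}, x)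
    simp only [EE, sgl_none, sgl_some]
    rcases Nat.mod_two_eq_zero_or_one l with hl | hl <;>
      simp [mul_aa, mul_ax, mul_xa_even, mul_xa_odd, hl, mulA_zero_left, mulA_zero_right,
        mulA_sub_right, mulA_add_right, mulA_smul_right]
  · -- (a, a, a)
    simp only [EE, sgl_some]
    simp [mul_aa, mulA_zero_left, mulA_zero_right]

end SRA_key

/-- `A^(ε)` satisfies the super right-alternative identity
`(a,b,c) + (−1)^{|b||c|}(a,c,b) = 0` for homogeneous `a`, `b`, `c`. -/

theorem stmt_12 {F : Type*} [Field F] (hchar : (2 : F) ≠ 0)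
    (ε : F) (hε : ε = 0 ∨ ε = 1)
    (p q r : ℕ) (a b c : AeSpace F)
    (ha : IsHomog p a) (hb : IsHomog q b) (hc : IsHomog r c) :
    (mulA F ε (mulA F ε a b) c - mulA F ε a (mulA F ε b c))
      + ((-1 : F) ^ (q * r)) •
        (mulA F ε (mulA F ε a c) b - mulA F ε a (mulA F ε c b)) = 0 := by
  have key : EE F ε ((-1 : F) ^ (q * r)) a b c = 0 := by
    rw [EE_expand]
    refine Finset.sum_eq_zero fun b1 _ => smul_eq_zero_of_right _ ?_
    refine Finset.sum_eq_zero fun b2 hb2 => smul_eq_zero_of_right _ ?_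
    refine Finset.sum_eq_zero fun b3 hc3 => smul_eq_zero_of_right _ ?_
    have hsg : ((-1 : F) ^ (q * r)) = (-1 : F) ^ (parB b2 * parB b3) :=
      negpow (by rw [hb b2 hb2, hc b3 hc3, ← Nat.mul_mod])
    rw [hsg]
    exact keyB hchar ε b1 b2 b3
  exact key
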